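/- arXiv:0806.2023 — 2 statements merged into one kernel-verified Lean document; each statement's English description precedes it below -/
import Mathlib

section
/- Suppose 0 < ε < 1/2, r ≥ 2, x ≥ (1+ε)(r+1), 0 < δ < (ε/6r)², and G is an r-graph with exactly C(x,r) edges such that K^r_{r+1}(G) > (1−δ)·C(x,r+1). Then the number of vertices v of G with degree d(v) > (1+δ^{1/2})·C(x−1,r−1) is at most δ^{1/2}·x. -/
/-- Generalized binomial coefficient `C(x, k) = x(x-1)⋯(x-k+1)/k!` for real `x`. -/
noncomputable def gchoose (x : ℝ) (k : ℕ) : ℝ :=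
  (∏ i ∈ Finset.range k, (x - i)) / (Nat.factorial k)

/-- `cliqueCount r G m` is the number of `m`-element vertex subsets all of whose
`r`-element subsets are edges of `G` (i.e. the number of copies of `K^r_m` in `G`). -/
def cliqueCount {V : Type*} [Fintype V] [DecidableEq V]
    (r : ℕ) (G : Finset (Finset V)) (m : ℕ) : ℕ :=
  ((Finset.powersetCard m (Finset.univ : Finset V)).filter
    (fun T => ∀ S ∈ Finset.powersetCard r T, S ∈ G)).card

/-- The degree of a vertex: the number of edges of `G` containing `v`. -/
def deg {V : Type*} [Fintype V] [DecidableEq V]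
    (G : Finset (Finset V)) (v : V) : ℕ :=
  (G.filter fun e => v ∈ e).card

lemma gchoose_succ_left (y : ℝ) (n : ℕ) :
    ((n : ℝ) + 1) * gchoose y (n + 1) = y * gchoose (y - 1) n := by
  unfold gchoose
  rw [Finset.prod_range_succ']
  have h : ∀ i ∈ Finset.range n, (y - ((i : ℕ) + 1 : ℕ)) = (y - 1 - i) := by
    intro i _; push_cast; ring
  rw [Finset.prod_congr rfl h]
  rw [Nat.factorial_succ]
  have h2 : ((Nat.factorial n : ℝ)) ≠ 0 := by positivity
  push_cast
  field_simp
  ring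

lemma gchoose_succ_right (y : ℝ) (n : ℕ) :
    ((n : ℝ) + 1) * gchoose y (n + 1) = (y - n) * gchoose y n := by
  unfold gchoose
  rw [Finset.prod_range_succ, Nat.factorial_succ]
  have h2 : ((Nat.factorial n : ℝ)) ≠ 0 := by positivity
  push_cast
  field_simp

lemma gchoose_zero (y : ℝ) : gchoose y 0 = 1 := by simp [gchoose]

lemma gchoose_pos (y : ℝ) (n : ℕ) (h : (n : ℝ) - 1 < y) : 0 < gchoose y n := by
  unfold gchoose
  apply div_pos
  · apply Finset.prod_pos
    intro i hi
    have : (i : ℝ) ≤ (n : ℝ) - 1 := by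
      have := Finset.mem_range.1 hi
      have : (i : ℝ) + 1 ≤ (n : ℝ) := by exact_mod_cast this
      linarith
    linarith
  · positivity

lemma gchoose_nonneg (y : ℝ) (n : ℕ) (h : (n : ℝ) - 1 ≤ y) : 0 ≤ gchoose y n := by
  rcases eq_or_lt_of_le h with h' | h'
  · unfold gchoose
    apply div_nonneg _ (by positivity)
    rcases Nat.eq_zero_or_pos n with rfl | hn
    · simp
    · have : y - ((n - 1 : ℕ) : ℝ) = 0 := by
        have : ((n - 1 : ℕ) : ℝ) = (n : ℝ) - 1 := by
          have : 1 ≤ n := hn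
          push_cast [this]; ring
        rw [this, ← h']; ring
      rw [Finset.prod_eq_zero (Finset.mem_range.2 (by omega)) this]
  · exact (gchoose_pos y n h').le


section Comb
variable {V : Type*} [Fintype V] [DecidableEq V]

/-- The set of `(s+1)`-cliques of an `s`-graph `H`. -/
def cliqs (s : ℕ) (H : Finset (Finset V)) : Finset (Finset V) :=
  (Finset.powersetCard (s + 1) (Finset.univ : Finset V)).filter
    (fun T => ∀ S ∈ Finset.powersetCard s T, S ∈ H)

/-- The link of a vertex. -/
def link (H : Finset (Finset V)) (v : V) : Finset (Finset V) :=
  (H.filter fun e => v ∈ e).image (fun e => e.erase v)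

lemma link_card (H : Finset (Finset V)) (v : V) : (link H v).card = deg H v := by
  apply Finset.card_image_of_injOn
  intro a ha b hb hab
  have hva : v ∈ a := (Finset.mem_filter.1 ha).2
  have hvb : v ∈ b := (Finset.mem_filter.1 hb).2
  have := congrArg (insert v) hab
  rwa [Finset.insert_erase hva, Finset.insert_erase hvb] at this

lemma link_sized {H : Finset (Finset V)} {s : ℕ} (hH : ∀ e ∈ H, e.card = s + 1) (v : V) :
    ∀ e ∈ link H v, e.card = s := by
  intro e he
  obtain ⟨a, ha, rfl⟩ := Finset.mem_image.1 he
  have hva : v ∈ a := (Finset.mem_filter.1 ha).2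
  simp [Finset.card_erase_of_mem hva, hH a (Finset.mem_filter.1 ha).1]

lemma cliqs_card (s : ℕ) {H : Finset (Finset V)} {T : Finset V} (hT : T ∈ cliqs s H) :
    T.card = s + 1 :=
  (Finset.mem_powersetCard.1 (Finset.mem_filter.1 hT).1).2

lemma sum_card_filter_mem (F : Finset (Finset V)) :
    ∑ v : V, ((F.filter (fun T => v ∈ T)).card) = ∑ T ∈ F, T.card := by
  simp only [Finset.card_filter]
  rw [Finset.sum_comm]
  refine Finset.sum_congr rfl fun T _ => ?_
  rw [Finset.sum_ite_mem, Finset.univ_inter, Finset.sum_const, smul_eq_mul, mul_one]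

/-- `K_v ≤` number of `s+1`-cliques of the link. -/
lemma cliq_filter_le_link (n : ℕ) (H : Finset (Finset V)) (v : V) :
    ((cliqs (n + 1) H).filter (fun T => v ∈ T)).card ≤ (cliqs n (link H v)).card := by
  apply Finset.card_le_card_of_injOn (fun T => T.erase v)
  · intro T hT
    obtain ⟨hT1, hvT⟩ := Finset.mem_filter.1 hT
    have hTcard : T.card = n + 2 := cliqs_card _ hT1
    have hprop := (Finset.mem_filter.1 hT1).2
    rw [cliqs, Finset.mem_coe, Finset.mem_filter, Finset.mem_powersetCard]
    refine ⟨⟨Finset.subset_univ _, by simp [Finset.card_erase_of_mem hvT, hTcard]⟩, ?_⟩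
    intro S hS
    obtain ⟨hSsub, hScard⟩ := Finset.mem_powersetCard.1 hS
    have hvS : v ∉ S := fun h => (Finset.mem_erase.1 (hSsub h)).1 rfl
    have hins : insert v S ∈ H := by
      apply hprop
      rw [Finset.mem_powersetCard]
      constructor
      · intro w hw
        rcases Finset.mem_insert.1 hw with rfl | hw
        · exact hvT
        · exact Finset.erase_subset _ _ (hSsub hw)
      · rw [Finset.card_insert_of_notMem hvS, hScard]
    rw [link, Finset.mem_image]
    exact ⟨insert v S, Finset.mem_filter.2 ⟨hins, Finset.mem_insert_self _ _⟩,
      by rw [Finset.erase_insert hvS]⟩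
  · intro a ha b hb hab
    have hva : v ∈ a := (Finset.mem_filter.1 ha).2
    have hvb : v ∈ b := (Finset.mem_filter.1 hb).2
    have := congrArg (insert v) hab
    rwa [Finset.insert_erase hva, Finset.insert_erase hvb] at this

/-- `K_v + d_v ≤ |H|`. -/
lemma cliq_filter_add_deg_le (s : ℕ) (H : Finset (Finset V)) (v : V) :
    ((cliqs s H).filter (fun T => v ∈ T)).card + deg H v ≤ H.card := by
  have h1 : ((cliqs s H).filter (fun T => v ∈ T)).card ≤ (H.filter fun e => v ∉ e).card := by
    apply Finset.card_le_card_of_injOn (fun T => T.erase v)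
    · intro T hT
      obtain ⟨hT1, hvT⟩ := Finset.mem_filter.1 hT
      have hTcard : T.card = s + 1 := cliqs_card _ hT1
      have hprop := (Finset.mem_filter.1 hT1).2
      rw [Finset.mem_coe, Finset.mem_filter]
      refine ⟨hprop _ ?_, Finset.notMem_erase _ _⟩
      rw [Finset.mem_powersetCard]
      exact ⟨Finset.erase_subset _ _, by simp [Finset.card_erase_of_mem hvT, hTcard]⟩
    · intro a ha b hb hab
      have hva : v ∈ a := (Finset.mem_filter.1 ha).2
      have hvb : v ∈ b := (Finset.mem_filter.1 hb).2
      have := congrArg (insert v) hab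
      rwa [Finset.insert_erase hva, Finset.insert_erase hvb] at this
  have h2 : (H.filter fun e => v ∉ e).card + deg H v = H.card := by
    rw [deg, add_comm]
    exact Finset.card_filter_add_card_filter_not (fun e => v ∈ e)
  omega

lemma cliqs_empty (n : ℕ) : cliqs n (∅ : Finset (Finset V)) = ∅ := by
  rw [Finset.eq_empty_iff_forall_notMem]
  intro T hT
  obtain ⟨hT1, hprop⟩ := Finset.mem_filter.1 hT
  have hcard : T.card = n + 1 := (Finset.mem_powersetCard.1 hT1).2
  obtain ⟨S, hSsub, hScard⟩ := Finset.exists_subset_card_eq (show n ≤ T.card by omega)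
  exact absurd (hprop S (Finset.mem_powersetCard.2 ⟨hSsub, hScard⟩)) (Finset.notMem_empty _)

end Comb

section ClaimB
variable {V : Type*} [Fintype V] [DecidableEq V]

set_option linter.unusedSectionVars false
set_option maxHeartbeats 800000

/-- Ratio form of the Lovász–Kruskal–Katona bound on cliques. -/
lemma claimB : ∀ (s : ℕ), 1 ≤ s → ∀ (H : Finset (Finset V)) (y : ℝ),
    (∀ e ∈ H, e.card = s) → (s : ℝ) ≤ y → ((H.card : ℝ) ≤ gchoose y s) →
    ((s : ℝ) + 1) * ((cliqs s H).card : ℝ) ≤ (y - (s : ℝ)) * (H.card : ℝ) := by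
  intro s
  induction s with
  | zero => omega
  | succ n ih =>
    intro _ H y hH hy hM
    set F := cliqs (n + 1) H with hF
    have hys : ((n : ℝ) + 1) ≤ y := by exact_mod_cast hy
    have hy0 : (0 : ℝ) ≤ y := le_trans (by positivity) hys
    -- double counting
    have hsum1 : ∑ v : V, ((F.filter (fun T => v ∈ T)).card) = (n + 2) * F.card := by
      rw [sum_card_filter_mem, Finset.sum_congr rfl (fun T hT => cliqs_card _ hT),
        Finset.sum_const, smul_eq_mul, mul_comm]
    have hsum2 : ∑ v : V, deg H v = (n + 1) * H.card := by
      rw [show (fun v : V => deg H v) = fun v => ((H.filter (fun T => v ∈ T)).card) from rfl,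
        sum_card_filter_mem, Finset.sum_congr rfl (fun e he => hH e he),
        Finset.sum_const, smul_eq_mul, mul_comm]
    -- per-vertex bound
    have key : ∀ v : V, ((n : ℝ) + 1) * (((F.filter (fun T => v ∈ T)).card : ℝ)) ≤
        (y - ((n : ℝ) + 1)) * (deg H v : ℝ) := by
      intro v
      have halg : gchoose (y - 1) n ≤ (deg H v : ℝ) →
          ((n : ℝ) + 1) * (((F.filter (fun T => v ∈ T)).card : ℝ)) ≤
            (y - ((n : ℝ) + 1)) * (deg H v : ℝ) := by
        intro hgd
        have h2n := cliq_filter_add_deg_le (n + 1) H v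
        have h2 : (((F.filter (fun T => v ∈ T)).card : ℝ)) + (deg H v : ℝ) ≤ (H.card : ℝ) := by
          exact_mod_cast h2n
        have hpas := gchoose_succ_left y n
        have hmul1 : ((n : ℝ) + 1) * ((H.card : ℝ) - deg H v) ≤
            ((n : ℝ) + 1) * (gchoose y (n + 1) - deg H v) := by
          have : (H.card : ℝ) - deg H v ≤ gchoose y (n + 1) - deg H v := by linarith
          exact mul_le_mul_of_nonneg_left this (by positivity)
        have hmul2 : y * gchoose (y - 1) n ≤ y * (deg H v : ℝ) :=
          mul_le_mul_of_nonneg_left hgd hy0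
        nlinarith [h2, hmul1, hmul2, hpas]
      by_cases h0 : deg H v = 0
      · have h1 := cliq_filter_le_link n H v
        have hlink : link H v = ∅ := Finset.card_eq_zero.1 (by rw [link_card]; exact h0)
        rw [hlink, cliqs_empty] at h1
        simp only [Finset.card_empty, Nat.le_zero] at h1
        rw [h1, h0]
        simp
      · by_cases hd : (deg H v : ℝ) ≤ gchoose (y - 1) n
        · rcases Nat.eq_zero_or_pos n with rfl | hn1
          · apply halg
            rw [gchoose_zero]
            exact_mod_cast Nat.one_le_iff_ne_zero.2 h0
          · have h1 := cliq_filter_le_link n H v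
            have h1' : (((F.filter (fun T => v ∈ T)).card : ℝ)) ≤
                ((cliqs n (link H v)).card : ℝ) := by exact_mod_cast h1
            have h2 := ih hn1 (link H v) (y - 1) (link_sized hH v)
              (by push_cast; linarith) (by rw [link_card]; exact hd)
            rw [link_card] at h2
            have h3 := mul_le_mul_of_nonneg_left h1' (show (0:ℝ) ≤ (n : ℝ) + 1 by positivity)
            linarith
        · exact halg (le_of_lt (not_le.1 hd))
    -- sum up
    have hsumle : ∑ v : V, (((n : ℝ) + 1) * (((F.filter (fun T => v ∈ T)).card : ℝ))) ≤
        ∑ v : V, ((y - ((n : ℝ) + 1)) * (deg H v : ℝ)) :=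
      Finset.sum_le_sum (fun v _ => key v)
    rw [← Finset.mul_sum, ← Finset.mul_sum] at hsumle
    have e1 : (∑ v : V, (((F.filter (fun T => v ∈ T)).card : ℝ))) =
        ((n : ℝ) + 2) * (F.card : ℝ) := by
      have := congrArg (fun k : ℕ => (k : ℝ)) hsum1
      push_cast at this
      simpa using this
    have e2 : (∑ v : V, ((deg H v : ℝ))) = ((n : ℝ) + 1) * (H.card : ℝ) := by
      have := congrArg (fun k : ℕ => (k : ℝ)) hsum2
      push_cast at this
      simpa using this
    rw [e1, e2] at hsumle
    have hpos : (0 : ℝ) < (n : ℝ) + 1 := by positivity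
    have hfin : ((n : ℝ) + 1) * (((n : ℝ) + 2) * (F.card : ℝ)) ≤
        ((n : ℝ) + 1) * ((y - ((n : ℝ) + 1)) * (H.card : ℝ)) := by linarith [hsumle]
    have := (mul_le_mul_iff_right₀ hpos).1 hfin
    push_cast
    linarith

end ClaimB

set_option maxHeartbeats 1000000 in
/-- Quantitative stability for the Kruskal–Katona theorem, part (2): at most `δ^{1/2}·x`
vertices have degree greater than `(1+δ^{1/2})·C(x-1,r-1)`. -/
theorem stmt7 {V : Type*} [Fintype V] [DecidableEq V] (ε : ℝ) (hε0 : 0 < ε)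
    (hε1 : ε < 1 / 2) (r : ℕ) (hr : 2 ≤ r) (x : ℝ) (hx : (1 + ε) * (r + 1) ≤ x)
    (δ : ℝ) (hδ0 : 0 < δ) (hδ : δ < (ε / (6 * r)) ^ 2)
    (G : Finset (Finset V)) (hG : ∀ e ∈ G, e.card = r)
    (hcard : (G.card : ℝ) = gchoose x r)
    (hK : (1 - δ) * gchoose x (r + 1) < (cliqueCount r G (r + 1) : ℝ)) :
    ((((Finset.univ : Finset V).filter fun v =>
        (1 + Real.sqrt δ) * gchoose (x - 1) (r - 1) < (deg G v : ℝ)).card : ℝ)) ≤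
      Real.sqrt δ * x := by
  obtain ⟨s, rfl⟩ : ∃ s, r = s + 1 := ⟨r - 1, by omega⟩
  have hs : 1 ≤ s := by omega
  simp only [Nat.add_sub_cancel]
  have hx2 : ((s : ℝ) + 1) + 1 ≤ x := by
    push_cast at hx
    nlinarith [hε0.le, hx]
  have hx0 : (0 : ℝ) ≤ x := by linarith [show (0:ℝ) ≤ (s:ℝ) from by positivity]
  have hmpos : 0 < gchoose x (s + 1) := gchoose_pos _ _ (by push_cast; linarith)
  set F := cliqs (s + 1) G with hFdef
  have hCC : (cliqueCount (s + 1) G (s + 1 + 1) : ℝ) = (F.card : ℝ) := rfl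
  have hpas : ((s : ℝ) + 1) * gchoose x (s + 1) = x * gchoose (x - 1) s :=
    gchoose_succ_left x s
  -- double counting
  have hsum1 : ∑ v : V, ((F.filter (fun T => v ∈ T)).card) = (s + 2) * F.card := by
    rw [sum_card_filter_mem, Finset.sum_congr rfl (fun T hT => cliqs_card _ hT),
      Finset.sum_const, smul_eq_mul, mul_comm]
  have hsum2 : ∑ v : V, deg G v = (s + 1) * G.card := by
    rw [show (fun v : V => deg G v) = fun v => ((G.filter (fun T => v ∈ T)).card) from rfl,
      sum_card_filter_mem, Finset.sum_congr rfl (fun e he => hG e he),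
      Finset.sum_const, smul_eq_mul, mul_comm]
  -- per-vertex bounds
  have key : ∀ v : V, ((s : ℝ) + 1) * (((F.filter (fun T => v ∈ T)).card : ℝ)) ≤
      (x - ((s : ℝ) + 1)) * (deg G v : ℝ) := by
    intro v
    by_cases hd : (deg G v : ℝ) ≤ gchoose (x - 1) s
    · have h1 := cliq_filter_le_link s G v
      have h1' : (((F.filter (fun T => v ∈ T)).card : ℝ)) ≤
          ((cliqs s (link G v)).card : ℝ) := by exact_mod_cast h1
      have h2 := claimB s hs (link G v) (x - 1) (link_sized hG v)
        (by push_cast; linarith) (by rw [link_card]; exact hd)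
      rw [link_card] at h2
      have h3 := mul_le_mul_of_nonneg_left h1' (show (0:ℝ) ≤ (s : ℝ) + 1 by positivity)
      linarith
    · have h2n := cliq_filter_add_deg_le (s + 1) G v
      have h2 : (((F.filter (fun T => v ∈ T)).card : ℝ)) + (deg G v : ℝ) ≤ (G.card : ℝ) := by
        exact_mod_cast h2n
      rw [hcard] at h2
      have hgd : gchoose (x - 1) s ≤ (deg G v : ℝ) := le_of_lt (not_le.1 hd)
      have hmul2 : x * gchoose (x - 1) s ≤ x * (deg G v : ℝ) :=
        mul_le_mul_of_nonneg_left hgd hx0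
      nlinarith [h2, hmul2, hpas, show (0:ℝ) ≤ (s:ℝ) + 1 by positivity]
  have keyB : ∀ v : V, (1 + Real.sqrt δ) * gchoose (x - 1) s < (deg G v : ℝ) →
      ((s : ℝ) + 1) * (((F.filter (fun T => v ∈ T)).card : ℝ)) ≤
        (x - ((s : ℝ) + 1)) * (deg G v : ℝ) -
          Real.sqrt δ * (((s : ℝ) + 1) * gchoose x (s + 1)) := by
    intro v hv
    have h2n := cliq_filter_add_deg_le (s + 1) G v
    have h2 : (((F.filter (fun T => v ∈ T)).card : ℝ)) + (deg G v : ℝ) ≤ (G.card : ℝ) := by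
      exact_mod_cast h2n
    rw [hcard] at h2
    have hmul2 : x * ((1 + Real.sqrt δ) * gchoose (x - 1) s) ≤ x * (deg G v : ℝ) :=
      mul_le_mul_of_nonneg_left hv.le hx0
    have hA : ((s : ℝ) + 1) * (((F.filter (fun T => v ∈ T)).card : ℝ)) ≤
        ((s : ℝ) + 1) * (gchoose x (s + 1) - (deg G v : ℝ)) :=
      mul_le_mul_of_nonneg_left (by linarith) (by positivity)
    have hδc : Real.sqrt δ * (((s : ℝ) + 1) * gchoose x (s + 1)) =
        Real.sqrt δ * (x * gchoose (x - 1) s) := by rw [hpas]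
    nlinarith [hA, hmul2, hδc, hpas]
  -- sum everything
  set P := fun v : V => (1 + Real.sqrt δ) * gchoose (x - 1) s < (deg G v : ℝ) with hP
  set B := (Finset.univ : Finset V).filter P with hB
  have hsplit := Finset.sum_filter_add_sum_filter_not (Finset.univ : Finset V) P
    (fun v => ((s : ℝ) + 1) * (((F.filter (fun T => v ∈ T)).card : ℝ)))
  have hBsum : ∑ v ∈ B, ((s : ℝ) + 1) * (((F.filter (fun T => v ∈ T)).card : ℝ)) ≤
      (∑ v ∈ B, (x - ((s : ℝ) + 1)) * (deg G v : ℝ)) -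
        B.card * (Real.sqrt δ * (((s : ℝ) + 1) * gchoose x (s + 1))) := by
    have hmem : ∀ v ∈ B, ((s : ℝ) + 1) * (((F.filter (fun T => v ∈ T)).card : ℝ)) ≤
        (x - ((s : ℝ) + 1)) * (deg G v : ℝ) -
          Real.sqrt δ * (((s : ℝ) + 1) * gchoose x (s + 1)) := by
      intro v hv
      rw [hB, Finset.mem_filter] at hv
      exact keyB v hv.2
    have h := Finset.sum_le_sum hmem
    rw [Finset.sum_sub_distrib, Finset.sum_const, nsmul_eq_mul] at h
    exact h
  have hnBsum : ∑ v ∈ (Finset.univ : Finset V).filter (fun v => ¬ P v),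
      ((s : ℝ) + 1) * (((F.filter (fun T => v ∈ T)).card : ℝ)) ≤
      ∑ v ∈ (Finset.univ : Finset V).filter (fun v => ¬ P v),
        (x - ((s : ℝ) + 1)) * (deg G v : ℝ) :=
    Finset.sum_le_sum (fun v _ => key v)
  have hdegsum : (∑ v ∈ B, (x - ((s : ℝ) + 1)) * (deg G v : ℝ)) +
      (∑ v ∈ (Finset.univ : Finset V).filter (fun v => ¬ P v),
        (x - ((s : ℝ) + 1)) * (deg G v : ℝ)) =
      (x - ((s : ℝ) + 1)) * (((s : ℝ) + 1) * gchoose x (s + 1)) := by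
    rw [← Finset.mul_sum, ← Finset.mul_sum, ← mul_add,
      Finset.sum_filter_add_sum_filter_not (Finset.univ : Finset V) P]
    have e2 : (∑ v : V, ((deg G v : ℝ))) = ((s : ℝ) + 1) * (G.card : ℝ) := by
      have := congrArg (fun k : ℕ => (k : ℝ)) hsum2
      push_cast at this
      simpa using this
    rw [e2, hcard]
  have e1 : (∑ v : V, (((F.filter (fun T => v ∈ T)).card : ℝ))) =
      ((s : ℝ) + 2) * (F.card : ℝ) := by
    have := congrArg (fun k : ℕ => (k : ℝ)) hsum1
    push_cast at this
    simpa using this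
  have etot : ((s : ℝ) + 1) * (((s : ℝ) + 2) * (F.card : ℝ)) ≤
      (x - ((s : ℝ) + 1)) * (((s : ℝ) + 1) * gchoose x (s + 1)) -
        B.card * (Real.sqrt δ * (((s : ℝ) + 1) * gchoose x (s + 1))) := by
    calc ((s : ℝ) + 1) * (((s : ℝ) + 2) * (F.card : ℝ))
        = ∑ v : V, ((s : ℝ) + 1) * (((F.filter (fun T => v ∈ T)).card : ℝ)) := by
          rw [← Finset.mul_sum, e1]
      _ = (∑ v ∈ B, ((s : ℝ) + 1) * (((F.filter (fun T => v ∈ T)).card : ℝ))) +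
          (∑ v ∈ (Finset.univ : Finset V).filter (fun v => ¬ P v),
            ((s : ℝ) + 1) * (((F.filter (fun T => v ∈ T)).card : ℝ))) := (hsplit).symm
      _ ≤ _ := by linarith [hBsum, hnBsum, hdegsum]
  -- use hK
  have hKpos : (0 : ℝ) < (s : ℝ) + 2 := by positivity
  have hK' : (1 - δ) * gchoose x (s + 1 + 1) < (F.card : ℝ) := by
    rw [← hCC]; exact_mod_cast hK
  have hpas2 : ((s : ℝ) + 2) * gchoose x (s + 2) = (x - ((s : ℝ) + 1)) * gchoose x (s + 1) := by
    have := gchoose_succ_right x (s + 1)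
    push_cast at this
    convert this using 2 <;> push_cast <;> ring
  have hmulK := mul_lt_mul_of_pos_left hK' hKpos
  -- combine: (1-δ)(x-(s+1))·M < (s+2)·F.card ≤ (x-(s+1))·M - b·√δ·M
  have hspos : (0 : ℝ) < (s : ℝ) + 1 := by positivity
  have hfinal : (1 - δ) * ((x - ((s : ℝ) + 1)) * gchoose x (s + 1)) <
      (x - ((s : ℝ) + 1)) * gchoose x (s + 1) -
        B.card * (Real.sqrt δ * gchoose x (s + 1)) := by
    have hdiv : ((s : ℝ) + 2) * (F.card : ℝ) ≤
        (x - ((s : ℝ) + 1)) * gchoose x (s + 1) -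
          B.card * (Real.sqrt δ * gchoose x (s + 1)) := by
      have h := etot
      nlinarith [h, hspos]
    calc (1 - δ) * ((x - ((s : ℝ) + 1)) * gchoose x (s + 1))
        = (1 - δ) * (((s : ℝ) + 2) * gchoose x (s + 2)) := by rw [hpas2]
      _ < ((s : ℝ) + 2) * (F.card : ℝ) := by
          have : (s : ℝ) + 1 + 1 = (s : ℝ) + 2 := by ring
          calc (1 - δ) * (((s : ℝ) + 2) * gchoose x (s + 2))
              = ((s : ℝ) + 2) * ((1 - δ) * gchoose x (s + 1 + 1)) := by
                rw [show (s + 2 : ℕ) = s + 1 + 1 from rfl]; ring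
            _ < _ := hmulK
      _ ≤ _ := hdiv
  -- extract the bound on B.card
  have hsd : 0 < Real.sqrt δ := Real.sqrt_pos.2 hδ0
  have hdd : Real.sqrt δ * Real.sqrt δ = δ := Real.mul_self_sqrt hδ0.le
  have hBlt : (B.card : ℝ) * Real.sqrt δ < δ * (x - ((s : ℝ) + 1)) := by
    have := hfinal
    nlinarith [hmpos, this]
  have : (B.card : ℝ) * Real.sqrt δ < Real.sqrt δ * (Real.sqrt δ * x) := by
    have hxr : δ * (x - ((s : ℝ) + 1)) ≤ δ * x := by
      apply mul_le_mul_of_nonneg_left _ hδ0.le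
      linarith [show (0:ℝ) ≤ (s:ℝ) + 1 by positivity]
    calc (B.card : ℝ) * Real.sqrt δ < δ * (x - ((s : ℝ) + 1)) := hBlt
      _ ≤ δ * x := hxr
      _ = Real.sqrt δ * (Real.sqrt δ * x) := by linear_combination x * hdd.symm
  have hfin2 : (B.card : ℝ) < Real.sqrt δ * x := by
    have h' : Real.sqrt δ * (B.card : ℝ) < Real.sqrt δ * (Real.sqrt δ * x) := by
      linarith [this]
    exact (mul_lt_mul_iff_right₀ hsd).1 h'
  exact hfin2.le
end

section
/- For every integer r ≥ 3 there exists a threshold u₀(r) with the following property: if C, C' > 0 and u, v, w are real numbers with v ≥ r−1, w ≥ r−2, u > u₀(r), satisfying C(u,r) = C(v,r) + C(w,r−1) and C' ≤ C(w,r−1) < C(u−1,r−1) − C, and moreover w < u − 2r, then C(v,r−1) + C(w,r−2) − C(u,r−1) > min{1/(4·r!), C'}. -/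
open Finset

private lemma gchoose_nonneg_s17 {n : ℕ} {x : ℝ} (hx : (n:ℝ) - 1 ≤ x) : 0 ≤ gchoose x n := by
  apply div_nonneg _ (by positivity)
  apply Finset.prod_nonneg
  intro i hi
  have hi' : (i:ℝ) + 1 ≤ n := by exact_mod_cast Finset.mem_range.mp hi
  linarith

private lemma gchoose_mono {n : ℕ} {x y : ℝ} (hx : (n:ℝ) - 1 ≤ x) (hxy : x ≤ y) :
    gchoose x n ≤ gchoose y n := by
  unfold gchoose
  have h0 : (0:ℝ) < n.factorial := by positivity
  rw [div_le_div_iff₀ h0 h0]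
  have : (∏ i ∈ Finset.range n, (x - i)) ≤ ∏ i ∈ Finset.range n, (y - i) := by
    apply Finset.prod_le_prod
    · intro i hi
      have hi' : (i:ℝ) + 1 ≤ n := by exact_mod_cast Finset.mem_range.mp hi
      linarith
    · intro i hi; linarith
  nlinarith

private lemma gchoose_succ (x : ℝ) (n : ℕ) :
    gchoose x (n+1) = gchoose x n * (x - n) / (n+1) := by
  unfold gchoose
  rw [Finset.prod_range_succ, Nat.factorial_succ]
  have h1 : (0:ℝ) < n.factorial := by positivity
  push_cast
  rw [div_mul_eq_mul_div, div_div, mul_comm ((n:ℝ)+1) (n.factorial:ℝ)]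

private lemma gchoose_pascal (x : ℝ) (n : ℕ) :
    gchoose x (n+1) = gchoose (x-1) (n+1) + gchoose (x-1) n := by
  unfold gchoose
  have e : ∀ i ∈ Finset.range n, x - ((i+1 : ℕ) : ℝ) = (x - 1) - i := by
    intro i _; push_cast; ring
  have h1 : ∏ i ∈ Finset.range (n+1), (x - i) = x * ∏ i ∈ Finset.range n, ((x-1) - i) := by
    rw [Finset.prod_range_succ', Finset.prod_congr rfl e]
    norm_num [mul_comm]
  have h2 : ∏ i ∈ Finset.range (n+1), ((x-1) - i)
      = (∏ i ∈ Finset.range n, ((x-1) - i)) * (x - 1 - n) := Finset.prod_range_succ _ _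
  rw [h1, h2, Nat.factorial_succ]
  have h3 : (0:ℝ) < n.factorial := by positivity
  push_cast
  field_simp
  ring

private lemma gchoose_lower {n : ℕ} {x c : ℝ} (hc : 0 ≤ c) (hx : c ≤ x - ((n:ℝ) - 1)) :
    c ^ n / (n.factorial : ℝ) ≤ gchoose x n := by
  unfold gchoose
  have h0 : (0:ℝ) < n.factorial := by positivity
  rw [div_le_div_iff₀ h0 h0]
  have : c ^ n ≤ ∏ i ∈ Finset.range n, (x - i) := by
    calc c ^ n = ∏ _i ∈ Finset.range n, c := by rw [Finset.prod_const, Finset.card_range]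
    _ ≤ _ := by
      apply Finset.prod_le_prod (fun _ _ => hc)
      intro i hi
      have hi' : (i:ℝ) + 1 ≤ n := by exact_mod_cast Finset.mem_range.mp hi
      linarith
  nlinarith

private lemma prod_tele (u v : ℝ) (n : ℕ) :
    (∏ i ∈ Finset.range n, (u - i)) - ∏ i ∈ Finset.range n, (v - i)
      = (u - v) * ∑ j ∈ Finset.range n,
          (∏ i ∈ Finset.range j, (u - i)) * ∏ i ∈ Finset.Ico (j+1) n, (v - i) := by
  induction n with
  | zero => simp
  | succ n ih =>
    rw [Finset.prod_range_succ, Finset.prod_range_succ, Finset.sum_range_succ]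
    rw [Finset.sum_congr rfl (fun j hj => by
      have hjn : j < n := Finset.mem_range.mp hj
      rw [Finset.prod_Ico_succ_top (by omega : j+1 ≤ n)])]
    rw [Finset.Ico_self, Finset.prod_empty, mul_one]
    simp only [← mul_assoc]
    rw [← Finset.sum_mul]
    linear_combination (v - (n:ℝ)) * ih


set_option maxHeartbeats 1600000 in
/-- Part (2) of the defect estimate: for `r ≥ 3` there is a threshold `u₀(r)` such that
if `C(u,r) = C(v,r) + C(w,r-1)`, `C' ≤ C(w,r-1) < C(u-1,r-1) - C` and `w < u - 2r`,
then `C(v,r-1) + C(w,r-2) - C(u,r-1) > min{1/(4·r!), C'}`. -/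
theorem stmt17 (r : ℕ) (hr : 3 ≤ r) :
    ∃ u0 : ℝ, ∀ C C' u v w : ℝ, 0 < C → 0 < C' →
      (r : ℝ) - 1 ≤ v → (r : ℝ) - 2 ≤ w → u0 < u →
      gchoose u r = gchoose v r + gchoose w (r - 1) →
      C' ≤ gchoose w (r - 1) →
      gchoose w (r - 1) < gchoose (u - 1) (r - 1) - C →
      w < u - 2 * r →
      min (1 / (4 * (Nat.factorial r : ℝ))) C' <
        gchoose v (r - 1) + gchoose w (r - 2) - gchoose u (r - 1) := by
  obtain ⟨m, rfl⟩ : ∃ m, r = m + 3 := ⟨r - 3, by omega⟩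
  refine ⟨3 * (m:ℝ) + 18, ?_⟩
  intro C C' u v w hC hC' hv hw hu hsum hC'w hCw hwu
  simp only [show m + 3 - 1 = m + 2 by omega, show m + 3 - 2 = m + 1 by omega] at hsum hC'w hCw ⊢
  push_cast at hv hw hwu
  -- basic setup
  set S := gchoose w (m+2) with hSdef
  set T2 := gchoose w (m+1) with hT2def
  clear_value S T2
  have hSpos : 0 < S := lt_of_lt_of_le hC' hC'w
  have hu0 : (0:ℝ) < u := by linarith
  have hm0 : (0:ℝ) ≤ (m:ℝ) := Nat.cast_nonneg m
  have hF3 : ((m:ℝ)+2) * S = T2 * (w - ((m:ℝ)+1)) := by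
    have h := gchoose_succ w (m+1)
    push_cast at h
    rw [show m+1+1 = m+2 by omega] at h
    rw [hSdef, hT2def, h]
    field_simp
    ring
  have hT2nn : 0 ≤ T2 := by
    rw [hT2def]
    apply gchoose_nonneg_s17; push_cast; linarith
  have ht0 : 0 ≤ w - ((m:ℝ)+1) := by linarith
  have hT2pos : 0 < T2 := by nlinarith
  have htpos : 0 < w - ((m:ℝ)+1) := by nlinarith
  -- v < u
  have hvltu : v < u := by
    by_contra hle
    push_neg at hle
    have := gchoose_mono (n := m+3) (x := u) (y := v) (by push_cast; linarith) hle
    linarith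
  -- u - 1 < v
  have hpas : gchoose u (m+3) = gchoose (u-1) (m+3) + gchoose (u-1) (m+2) := gchoose_pascal u (m+2)
  have hv1 : u - 1 < v := by
    by_contra hle
    push_neg at hle
    have := gchoose_mono (n := m+3) (x := v) (y := u - 1) (by push_cast; linarith) hle
    linarith
  -- products
  set P := ∏ i ∈ Finset.range (m+2), (u - (i:ℝ)) with hPdef
  set Q := ∏ i ∈ Finset.range (m+1), (u - (i:ℝ)) with hQdef
  set A := ∑ j ∈ Finset.range (m+2),
      (∏ i ∈ Finset.range j, (u - (i:ℝ))) * ∏ i ∈ Finset.Ico (j+1) (m+2), (v - (i:ℝ)) with hAdef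
  clear_value P Q A
  have hfactpos : ∀ i ∈ Finset.range (m+2), (0:ℝ) < u - i := by
    intro i hi
    have hi' : (i:ℝ) + 1 ≤ (m:ℝ) + 2 := by exact_mod_cast Finset.mem_range.mp hi
    linarith
  have hQpos : 0 < Q := by
    rw [hQdef]
    apply Finset.prod_pos
    intro i hi
    have h1 := Finset.mem_range.mp hi
    exact hfactpos i (Finset.mem_range.mpr (by omega))
  have hPQ : P = Q * (u - ((m:ℝ)+1)) := by
    rw [hPdef, hQdef, show m+2 = (m+1)+1 by omega, Finset.prod_range_succ]
    push_cast
    ring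
  have hPpos : 0 < P := by
    rw [hPQ]; apply mul_pos hQpos; linarith
  have hAnn : 0 ≤ A := by
    rw [hAdef]
    apply Finset.sum_nonneg
    intro j hj
    apply mul_nonneg
    · apply Finset.prod_nonneg
      intro i hi
      have := Finset.mem_range.mp hi
      have := Finset.mem_range.mp hj
      exact (hfactpos i (Finset.mem_range.mpr (by omega))).le
    · apply Finset.prod_nonneg
      intro i hi
      have hi2 : (i:ℝ) ≤ (m:ℝ) + 1 := by
        have h1 := (Finset.mem_Ico.mp hi).2
        have h2 : i ≤ m + 1 := by omega
        exact_mod_cast h2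
      linarith
  have hAle : A ≤ ((m:ℝ)+2) * Q := by
    have hterm : ∀ j ∈ Finset.range (m+2),
        (∏ i ∈ Finset.range j, (u - (i:ℝ))) * ∏ i ∈ Finset.Ico (j+1) (m+2), (v - (i:ℝ)) ≤ Q := by
      intro j hj
      have hjm : j < m+2 := Finset.mem_range.mp hj
      have hjR : (j:ℝ) ≤ (m:ℝ) + 1 := by
        have h2 : j ≤ m + 1 := by omega
        exact_mod_cast h2
      have hprjnn : 0 ≤ ∏ i ∈ Finset.range j, (u - (i:ℝ)) := by
        apply Finset.prod_nonneg
        intro i hi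
        have := Finset.mem_range.mp hi
        exact (hfactpos i (Finset.mem_range.mpr (by omega))).le
      have step1 : (∏ i ∈ Finset.Ico (j+1) (m+2), (v - (i:ℝ)))
          ≤ ∏ i ∈ Finset.Ico (j+1) (m+2), (u - (i:ℝ)) := by
        apply Finset.prod_le_prod
        · intro i hi
          have hi2 : (i:ℝ) ≤ (m:ℝ) + 1 := by
            have h1 := (Finset.mem_Ico.mp hi).2
            have h2 : i ≤ m + 1 := by omega
            exact_mod_cast h2
          linarith
        · intro i hi; linarith
      have hbP : (∏ i ∈ Finset.range j, (u - (i:ℝ)))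
          * ((u - j) * ∏ i ∈ Finset.Ico (j+1) (m+2), (u - (i:ℝ))) = P := by
        rw [hPdef, ← Finset.prod_range_mul_prod_Ico _ (le_of_lt hjm)]
        congr 1
        rw [Finset.prod_eq_prod_Ico_succ_bot hjm]
      have hujpos : (0:ℝ) < u - j := by linarith
      have hb : (∏ i ∈ Finset.range j, (u - (i:ℝ)))
          * ∏ i ∈ Finset.Ico (j+1) (m+2), (u - (i:ℝ)) ≤ Q := by
        have h2 : Q * (u - ((m:ℝ)+1)) ≤ Q * (u - j) :=
          mul_le_mul_of_nonneg_left (by linarith) hQpos.le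
        have h1 : ((∏ i ∈ Finset.range j, (u - (i:ℝ)))
            * ∏ i ∈ Finset.Ico (j+1) (m+2), (u - (i:ℝ))) * (u - j) ≤ Q * (u - j) := by
          linarith only [hbP, hPQ, h2]
        exact le_of_mul_le_mul_right h1 hujpos
      calc (∏ i ∈ Finset.range j, (u - (i:ℝ))) * ∏ i ∈ Finset.Ico (j+1) (m+2), (v - (i:ℝ))
          ≤ (∏ i ∈ Finset.range j, (u - (i:ℝ))) * ∏ i ∈ Finset.Ico (j+1) (m+2), (u - (i:ℝ)) :=
            mul_le_mul_of_nonneg_left step1 hprjnn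
        _ ≤ Q := hb
    rw [hAdef]
    calc (∑ j ∈ Finset.range (m+2),
        (∏ i ∈ Finset.range j, (u - (i:ℝ))) * ∏ i ∈ Finset.Ico (j+1) (m+2), (v - (i:ℝ)))
        ≤ ∑ _j ∈ Finset.range (m+2), Q := Finset.sum_le_sum hterm
    _ = ((m:ℝ)+2) * Q := by
        rw [Finset.sum_const, Finset.card_range, nsmul_eq_mul]
        push_cast
        ring
  -- telescoping identities
  have hfac2 : (0:ℝ) < ((m+2).factorial : ℝ) := by positivity
  have hfac3 : (0:ℝ) < ((m+3).factorial : ℝ) := by positivity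
  have ht2 : (gchoose u (m+2) - gchoose v (m+2)) * ((m+2).factorial : ℝ) = (u - v) * A := by
    have h := prod_tele u v (m+2)
    rw [← hAdef] at h
    unfold gchoose
    rw [sub_mul, div_mul_cancel₀ _ hfac2.ne', div_mul_cancel₀ _ hfac2.ne', ← hPdef]
    rw [← hPdef] at h
    exact h
  have hsplit : ∑ j ∈ Finset.range (m+3), (∏ i ∈ Finset.range j, (u - (i:ℝ)))
        * ∏ i ∈ Finset.Ico (j+1) (m+3), (v - (i:ℝ))
      = A * (v - ((m:ℝ)+2)) + P := by
    rw [show m+3 = (m+2)+1 by omega, Finset.sum_range_succ]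
    rw [Finset.sum_congr rfl (fun j hj => by
      have hjm : j < m+2 := Finset.mem_range.mp hj
      rw [Finset.prod_Ico_succ_top (by omega : j+1 ≤ m+2)])]
    simp only [← mul_assoc]
    rw [← Finset.sum_mul, ← hAdef, Finset.Ico_self, Finset.prod_empty, mul_one, ← hPdef]
    push_cast
    ring
  have hS_eq : S = gchoose u (m+3) - gchoose v (m+3) := by linarith
  have ht3 : S * ((m+3).factorial : ℝ) = (u - v) * ((v - ((m:ℝ)+2)) * A + P) := by
    rw [hS_eq]
    have h := prod_tele u v (m+3)
    rw [hsplit] at h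
    unfold gchoose
    rw [sub_mul, div_mul_cancel₀ _ hfac3.ne', div_mul_cancel₀ _ hfac3.ne', h]
    ring
  -- key algebraic relations
  have hfac32 : ((m+3).factorial : ℝ) = ((m:ℝ)+3) * ((m+2).factorial : ℝ) := by
    rw [show m+3 = (m+2)+1 by omega, Nat.factorial_succ]
    push_cast
    ring
  set Δ := gchoose u (m+2) - gchoose v (m+2) with hDdef
  clear_value Δ
  have hDnn : 0 ≤ Δ := by
    rw [hDdef]
    have := gchoose_mono (n := m+2) (x := v) (y := u) (by push_cast; linarith) hvltu.le
    linarith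
  have hkey : ((m:ℝ)+3) * S * ((m+2).factorial:ℝ)
      = (v - ((m:ℝ)+2)) * ((u-v) * A) + (u-v) * P := by
    linear_combination ht3 - S * hfac32
  have heq : (v - ((m:ℝ)+2)) * Δ * ((m+2).factorial:ℝ)
      = ((m:ℝ)+3) * S * ((m+2).factorial:ℝ) - (u-v) * P := by
    linear_combination (v - ((m:ℝ)+2)) * ht2 - hkey
  have Estrict : (v - ((m:ℝ)+2)) * Δ < ((m:ℝ)+3) * S := by
    have h1 : ((v - ((m:ℝ)+2)) * Δ) * ((m+2).factorial:ℝ)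
        < (((m:ℝ)+3) * S) * ((m+2).factorial:ℝ) := by
      have hp := mul_pos (show (0:ℝ) < u - v by linarith) hPpos
      linarith only [heq, hp]
    exact lt_of_mul_lt_mul_right h1 hfac2.le
  -- lower bound on u - v
  have hXle : (v - ((m:ℝ)+2)) * A + P ≤ ((m:ℝ)+3) * u * Q := by
    have h1 : (v - ((m:ℝ)+2)) * A ≤ (u - ((m:ℝ)+2)) * A :=
      mul_le_mul_of_nonneg_right (by linarith) hAnn
    have h2 : (u - ((m:ℝ)+2)) * A ≤ (u - ((m:ℝ)+2)) * (((m:ℝ)+2) * Q) :=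
      mul_le_mul_of_nonneg_left hAle (by linarith)
    have h3 : (0:ℝ) ≤ (m:ℝ) * Q := mul_nonneg hm0 hQpos.le
    have h4 : (0:ℝ) ≤ (m:ℝ) * ((m:ℝ) * Q) := mul_nonneg hm0 h3
    linarith only [hPQ, hQpos, h1, h2, h3, h4]
  have hslow : ((m+2).factorial:ℝ) * S ≤ (u - v) * u * Q := by
    have h3 : S * ((m+3).factorial : ℝ) ≤ (u-v) * (((m:ℝ)+3) * u * Q) := by
      rw [ht3]
      exact mul_le_mul_of_nonneg_left hXle (by linarith)
    rw [hfac32] at h3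
    have h5 : (((m+2).factorial:ℝ) * S) * ((m:ℝ)+3) ≤ ((u - v) * u * Q) * ((m:ℝ)+3) := by
      linarith only [h3]
    exact le_of_mul_le_mul_right h5 (by linarith)
  have heq2 : (u-v) * P * u = (u - v) * u * Q * (u - ((m:ℝ)+1)) := by rw [hPQ]; ring
  have hsPu : ((m+2).factorial:ℝ) * S * (u - ((m:ℝ)+1)) ≤ (u-v) * P * u := by
    have h4 := mul_le_mul_of_nonneg_right hslow (show (0:ℝ) ≤ u - ((m:ℝ)+1) by linarith)
    rw [heq2]
    linarith only [h4]
  have heq_u : (v - ((m:ℝ)+2)) * Δ * ((m+2).factorial:ℝ) * u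
      = ((m:ℝ)+3) * S * ((m+2).factorial:ℝ) * u - (u-v) * P * u := by
    linear_combination u * heq
  have E2 : (v - ((m:ℝ)+2)) * Δ * u ≤ (((m:ℝ)+2) * u + ((m:ℝ)+1)) * S := by
    have hE2F : ((v - ((m:ℝ)+2)) * Δ * u) * ((m+2).factorial:ℝ)
        ≤ ((((m:ℝ)+2) * u + ((m:ℝ)+1)) * S) * ((m+2).factorial:ℝ) := by
      linarith only [heq_u, hsPu]
    exact le_of_mul_le_mul_right hE2F hfac2
  -- rewrite the goal
  have hgoal : gchoose v (m+2) + T2 - gchoose u (m+2) = T2 - Δ := by rw [hDdef]; ring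
  rw [hgoal]
  -- case analysis on t = w - (m+1)
  rcases le_or_gt (w - ((m:ℝ)+1)) (((m:ℝ)+2)/2) with hcase | hcase
  · -- Case 1 : t small, beat C'
    have hSle : S ≤ T2 / 2 := by
      have h1 : T2 * (w - ((m:ℝ)+1)) ≤ T2 * (((m:ℝ)+2)/2) :=
        mul_le_mul_of_nonneg_left hcase hT2nn
      have h2 : S * ((m:ℝ)+2) ≤ (T2/2) * ((m:ℝ)+2) := by linarith only [hF3, h1]
      exact le_of_mul_le_mul_right h2 (by linarith)
    have hDlt : Δ < T2 / 2 := by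
      have h1 : ((m:ℝ)+3) * Δ ≤ (v - ((m:ℝ)+2)) * Δ :=
        mul_le_mul_of_nonneg_right (by linarith) hDnn
      have h2 : ((m:ℝ)+3) * S ≤ ((m:ℝ)+3) * (T2/2) :=
        mul_le_mul_of_nonneg_left hSle (by linarith)
      have h3 : Δ * ((m:ℝ)+3) < (T2/2) * ((m:ℝ)+3) := by linarith only [Estrict, h1, h2]
      exact lt_of_mul_lt_mul_right h3 (by linarith)
    calc min (1 / (4 * ((m+3).factorial:ℝ))) C' ≤ C' := min_le_right _ _
    _ ≤ S := hC'w
    _ ≤ T2 / 2 := hSle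
    _ < T2 - Δ := by linarith
  · -- Case 2 : t large, beat 1/(4 r!)
    have hfac1 : (0:ℝ) < ((m+1).factorial : ℝ) := by positivity
    have hT2low : ((w - ((m:ℝ)+1)) + 1) ^ (m+1) / ((m+1).factorial : ℝ) ≤ T2 := by
      rw [hT2def]
      apply gchoose_lower (by linarith)
      push_cast
      linarith
    have hfacmono : ((m+1).factorial : ℝ) ≤ ((m+3).factorial : ℝ) := by
      exact_mod_cast Nat.factorial_le (by omega)
    have ht1 : 2 ≤ (w - ((m:ℝ)+1)) + 1 := by linarith
    have h8 : ((w - ((m:ℝ)+1)) + 1) ^ (m+1) ≤ T2 * ((m+1).factorial : ℝ) :=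
      (div_le_iff₀ hfac1).mp hT2low
    rcases le_or_gt (3 * (w - ((m:ℝ)+1))) (u - ((m:ℝ)+3)) with hc2 | hc2
    · -- Case 2a
      have hpow2 : (2:ℝ) ≤ ((w - ((m:ℝ)+1)) + 1) ^ (m+1) := by
        calc (2:ℝ) ≤ 2 ^ (m+1) := le_self_pow₀ (by norm_num) (Nat.succ_ne_zero m)
        _ ≤ _ := pow_le_pow_left₀ (by norm_num) ht1 _
      have hT2ge : 2 ≤ T2 * ((m+1).factorial : ℝ) := by linarith only [h8, hpow2]
      have hDlt : Δ < T2 / 2 := by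
        rcases le_or_gt Δ 0 with h | hDpos
        · linarith
        · have heqa : ((m:ℝ)+2) * (((m:ℝ)+3) * S) = ((m:ℝ)+3) * (T2 * (w - ((m:ℝ)+1))) := by
            linear_combination ((m:ℝ)+3) * hF3
          have h1 : ((m:ℝ)+2) * ((v - ((m:ℝ)+2)) * Δ) < ((m:ℝ)+3) * (T2 * (w - ((m:ℝ)+1))) := by
            have := mul_lt_mul_of_pos_left Estrict (show (0:ℝ) < (m:ℝ)+2 by linarith)
            linarith only [this, heqa]
          have h3 : (3 * (w - ((m:ℝ)+1))) * Δ ≤ (v - ((m:ℝ)+2)) * Δ :=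
            mul_le_mul_of_nonneg_right (by linarith) hDpos.le
          have h2 : (3 * ((m:ℝ)+2) * Δ) * (w - ((m:ℝ)+1))
              < (((m:ℝ)+3) * T2) * (w - ((m:ℝ)+1)) := by
            have h4 : ((m:ℝ)+2) * ((3 * (w - ((m:ℝ)+1))) * Δ)
                ≤ ((m:ℝ)+2) * ((v - ((m:ℝ)+2)) * Δ) :=
              mul_le_mul_of_nonneg_left h3 (by linarith)
            linarith only [h1, h4]
          have h4 : 3 * ((m:ℝ)+2) * Δ < ((m:ℝ)+3) * T2 := lt_of_mul_lt_mul_right h2 ht0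
          have h5 : (T2/2) * (2*((m:ℝ)+3)) ≤ (T2/2) * (3*((m:ℝ)+2)) :=
            mul_le_mul_of_nonneg_left (by linarith) (by linarith)
          have h6 : Δ * (3*((m:ℝ)+2)) < (T2/2) * (3*((m:ℝ)+2)) := by linarith only [h4, h5]
          exact lt_of_mul_lt_mul_right h6 (by linarith)
      have hmin : min (1 / (4 * ((m+3).factorial:ℝ))) C' ≤ 1 / (4 * ((m+3).factorial:ℝ)) :=
        min_le_left _ _
      have hlt1 : 1 / (4 * ((m+3).factorial:ℝ)) < 1 / ((m+1).factorial:ℝ) := by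
        rw [div_lt_div_iff₀ (by positivity) hfac1]
        linarith only [hfacmono, hfac3]
      have hlt2 : 1 / ((m+1).factorial:ℝ) ≤ T2 / 2 := by
        rw [div_le_div_iff₀ hfac1 (by norm_num)]
        linarith only [hT2ge]
      linarith
    · -- Case 2b
      have hU1 : (2:ℝ)*m + 15 < u - ((m:ℝ)+3) := by linarith
      have hUnn : (0:ℝ) ≤ u - ((m:ℝ)+3) := by linarith
      have hvd : u - ((m:ℝ)+3) < v - ((m:ℝ)+2) := by linarith
      have htlt : w - ((m:ℝ)+1) < u - 3*(m:ℝ) - 7 := by linarith [hwu]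
      have hp1 : (0:ℝ) < ((m:ℝ)+2) * u := by positivity
      have hN : 7 * u < ((m:ℝ)+2) * (v - ((m:ℝ)+2)) * u
          - (w - ((m:ℝ)+1)) * (((m:ℝ)+2) * u + ((m:ℝ)+1)) := by
        have ha : ((m:ℝ)+2) * u * (u - ((m:ℝ)+3)) < ((m:ℝ)+2) * u * (v - ((m:ℝ)+2)) :=
          mul_lt_mul_of_pos_left hvd hp1
        have hp2 : (0:ℝ) < ((m:ℝ)+2) * u + ((m:ℝ)+1) := by linarith only [hp1, hm0]
        have hb : (w - ((m:ℝ)+1)) * (((m:ℝ)+2) * u + ((m:ℝ)+1))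
            < (u - 3*(m:ℝ) - 7) * (((m:ℝ)+2) * u + ((m:ℝ)+1)) :=
          mul_lt_mul_of_pos_right htlt hp2
        have hq1 : (0:ℝ) ≤ (m:ℝ) * u := mul_nonneg hm0 hu0.le
        have hq2 : (0:ℝ) ≤ (m:ℝ) * ((m:ℝ) * u) := mul_nonneg hm0 hq1
        have hq3 : (0:ℝ) ≤ (m:ℝ) * (m:ℝ) := mul_nonneg hm0 hm0
        linarith only [ha, hb, hq1, hq2, hq3, hm0, hu0]
      have hDpos2 : (0:ℝ) < ((m:ℝ)+2) * (v - ((m:ℝ)+2)) * u :=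
        mul_pos (mul_pos (by linarith) (by linarith)) hu0
      have heq3 : ((m:ℝ)+2) * ((((m:ℝ)+2)*u + ((m:ℝ)+1)) * S)
          = T2 * (w - ((m:ℝ)+1)) * ((((m:ℝ)+2))*u + ((m:ℝ)+1)) := by
        linear_combination ((((m:ℝ)+2))*u + ((m:ℝ)+1)) * hF3
      have hgapD : 7 * u * T2 < (T2 - Δ) * (((m:ℝ)+2) * (v - ((m:ℝ)+2)) * u) := by
        have h5 := mul_le_mul_of_nonneg_left E2 (show (0:ℝ) ≤ (m:ℝ)+2 by linarith)
        have hDd : Δ * (((m:ℝ)+2) * (v - ((m:ℝ)+2)) * u)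
            ≤ T2 * (w - ((m:ℝ)+1)) * (((m:ℝ)+2) * u + ((m:ℝ)+1)) := by
          linarith [h5, heq3]
        have hT2N := mul_lt_mul_of_pos_left hN hT2pos
        nlinarith only [hDd, hT2N]
      have hT2U : u - ((m:ℝ)+3) < 3 * ((m+1).factorial:ℝ) * T2 := by
        have h7 : ((w - ((m:ℝ)+1)) + 1) ≤ ((w - ((m:ℝ)+1)) + 1)^(m+1) :=
          le_self_pow₀ (by linarith) (Nat.succ_ne_zero m)
        linarith only [h7, h8, hc2]
      have hDlt2 : ((m:ℝ)+2) * (v - ((m:ℝ)+2)) * u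
          < 2 * ((m:ℝ)+2) * (u - ((m:ℝ)+3)) * u := by
        have h9 : v - ((m:ℝ)+2) < 2 * (u - ((m:ℝ)+3)) := by linarith
        have h10 := mul_lt_mul_of_pos_left h9 hp1
        linarith only [h10]
      have hF31 : ((m+3).factorial:ℝ) = ((m:ℝ)+3)*((m:ℝ)+2)*((m+1).factorial:ℝ) := by
        rw [show m+3 = (m+2)+1 by omega, Nat.factorial_succ,
          show m+2 = (m+1)+1 by omega, Nat.factorial_succ]
        push_cast
        ring
      have hfin : 1 / (4 * ((m+3).factorial:ℝ)) < T2 - Δ := by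
        rw [div_lt_iff₀ (by positivity)]
        have e1 : (4*((m+3).factorial:ℝ)) * (7 * u * T2)
            < (4*((m+3).factorial:ℝ)) * ((T2 - Δ) * (((m:ℝ)+2) * (v - ((m:ℝ)+2)) * u)) :=
          mul_lt_mul_of_pos_left hgapD (by positivity)
        have e2 : (4*((m+3).factorial:ℝ)) * (7 * u * T2)
            = ((28/3) * (((m:ℝ)+3)*((m:ℝ)+2)) * u) * (3 * ((m+1).factorial:ℝ) * T2) := by
          rw [hF31]; ring
        have e3 : ((28/3) * (((m:ℝ)+3)*((m:ℝ)+2)) * u) * (u - ((m:ℝ)+3))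
            < ((28/3) * (((m:ℝ)+3)*((m:ℝ)+2)) * u) * (3 * ((m+1).factorial:ℝ) * T2) := by
          apply mul_lt_mul_of_pos_left hT2U
          positivity
        have e4 : 2 * ((m:ℝ)+2) * (u - ((m:ℝ)+3)) * u
            ≤ ((28/3) * (((m:ℝ)+3)*((m:ℝ)+2)) * u) * (u - ((m:ℝ)+3)) := by
          have hq1 : (0:ℝ) ≤ (u - ((m:ℝ)+3)) * u := mul_nonneg hUnn hu0.le
          have hq2 : (0:ℝ) ≤ (m:ℝ) * ((u - ((m:ℝ)+3)) * u) := mul_nonneg hm0 hq1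
          have hq3 : (0:ℝ) ≤ (m:ℝ) * ((m:ℝ) * ((u - ((m:ℝ)+3)) * u)) := mul_nonneg hm0 hq2
          linarith only [hq1, hq2, hq3, hUnn, hu0, hm0]
        have e5 : 1 * (((m:ℝ)+2) * (v - ((m:ℝ)+2)) * u)
            < ((T2 - Δ) * (4 * ((m+3).factorial:ℝ))) * (((m:ℝ)+2) * (v - ((m:ℝ)+2)) * u) := by
          linarith only [e1, e2, e3, e4, hDlt2]
        exact lt_of_mul_lt_mul_right e5 hDpos2.le
      calc min (1 / (4 * ((m+3).factorial:ℝ))) C' ≤ 1 / (4 * ((m+3).factorial:ℝ)) :=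
        min_le_left _ _
      _ < T2 - Δ := hfin
end
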